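/- Let G be a finite connected simple graph and κ_0 > 0. With I_{κ_0} = ∑_{xy∈E} max{0, κ_0 − κ_LLY(x,y)}, the diameter of G satisfies Diam(G) ≤ ⌊(2 + I_{κ_0})/κ_0⌋. -/

import Mathlib

open Finset

/-- A probability measure on a finite set, given as a density. -/
def IsProbMeasure {V : Type*} [Fintype V] (m : V → ℝ) : Prop :=
  (∀ x, 0 ≤ m x) ∧ ∑ x, m x = 1

/-- A coupling between two probability measures on a finite set. -/
def IsCoupling {V : Type*} [Fintype V] (A : V × V → ℝ) (m₁ m₂ : V → ℝ) : Prop :=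
  (∀ p, 0 ≤ A p) ∧ (∀ x, ∑ y, A (x, y) = m₁ x) ∧ (∀ y, ∑ x, A (x, y) = m₂ y)

/-- The Wasserstein-1 (transportation) distance between two probability measures on a
finite set, with respect to a cost `d`. -/
noncomputable def W {V : Type*} [Fintype V] (d : V → V → ℝ) (m₁ m₂ : V → ℝ) : ℝ :=
  sInf {c | ∃ A, IsCoupling A m₁ m₂ ∧ c = ∑ p : V × V, A p * d p.1 p.2}

lemma W_symm {V : Type*} [Fintype V] (d : V → V → ℝ) (hd : ∀ x y, d x y = d y x)
    (m₁ m₂ : V → ℝ) : W d m₁ m₂ = W d m₂ m₁ := by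
  have key : ∀ m₁ m₂ : V → ℝ,
      {c | ∃ A, IsCoupling A m₁ m₂ ∧ c = ∑ p : V × V, A p * d p.1 p.2} ⊆
      {c | ∃ A, IsCoupling A m₂ m₁ ∧ c = ∑ p : V × V, A p * d p.1 p.2} := by
    rintro m₁ m₂ c ⟨A, ⟨h0, h1, h2⟩, rfl⟩
    refine ⟨fun p => A (p.2, p.1), ⟨fun p => h0 _, fun x => h2 x, fun y => h1 y⟩, ?_⟩
    refine Fintype.sum_equiv (Equiv.prodComm V V) _ _ ?_
    intro p
    simp [Equiv.prodComm, hd p.1 p.2]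
  unfold W
  congr 1
  exact Set.Subset.antisymm (key m₁ m₂) (key m₂ m₁)

/-- The `α`-lazy random walk measure at a vertex `x` of a graph. -/
noncomputable def lazyWalk {V : Type*} [Fintype V] [DecidableEq V] (G : SimpleGraph V)
    [DecidableRel G.Adj] (α : ℝ) (x : V) : V → ℝ :=
  fun v => if v = x then α else if G.Adj x v then (1 - α) / (G.degree x) else 0

/-- The `α`-Ricci curvature `κ_α(x,y) = 1 - W(m_x^α, m_y^α)/d(x,y)`. -/
noncomputable def kappaAlpha {V : Type*} [Fintype V] [DecidableEq V] (G : SimpleGraph V)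
    [DecidableRel G.Adj] (α : ℝ) (x y : V) : ℝ :=
  1 - W (fun a b => (G.dist a b : ℝ)) (lazyWalk G α x) (lazyWalk G α y) / (G.dist x y)

lemma kappaAlpha_symm {V : Type*} [Fintype V] [DecidableEq V] (G : SimpleGraph V)
    [DecidableRel G.Adj] (α : ℝ) (x y : V) :
    kappaAlpha G α x y = kappaAlpha G α y x := by
  unfold kappaAlpha
  rw [W_symm _ (fun a b => by rw [SimpleGraph.dist_comm]),
    SimpleGraph.dist_comm]

/-- The Lin–Lu–Yau Ricci curvature `κ_LLY(x,y) = lim_{α → 1⁻} κ_α(x,y)/(1-α)`. -/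
noncomputable def kappaLLY {V : Type*} [Fintype V] [DecidableEq V] (G : SimpleGraph V)
    [DecidableRel G.Adj] (x y : V) : ℝ :=
  Filter.limUnder (nhdsWithin 1 (Set.Ico (0:ℝ) 1)) (fun α => kappaAlpha G α x y / (1 - α))

lemma kappaLLY_symm {V : Type*} [Fintype V] [DecidableEq V] (G : SimpleGraph V)
    [DecidableRel G.Adj] (x y : V) : kappaLLY G x y = kappaLLY G y x := by
  unfold kappaLLY
  congr 1
  funext α
  rw [kappaAlpha_symm]

/-- Integral `α`-Ricci curvature `I^α_{κ₀}`: total amount of `α`-Ricci curvature below the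
threshold `(1-α)κ₀`, summed over the edges of `G`. -/
noncomputable def IAlpha {V : Type*} [Fintype V] [DecidableEq V] (G : SimpleGraph V)
    [DecidableRel G.Adj] (α κ₀ : ℝ) : ℝ :=
  ∑ e ∈ G.edgeFinset,
    Sym2.lift ⟨fun x y => max 0 ((1 - α) * κ₀ - kappaAlpha G α x y),
      fun x y => by simp only []; rw [kappaAlpha_symm]⟩ e

/-- Integral Lin–Lu–Yau Ricci curvature `I_{κ₀}`: total amount of Lin–Lu–Yau Ricci curvature
below the threshold `κ₀`, summed over the edges of `G`. -/
noncomputable def ILLY {V : Type*} [Fintype V] [DecidableEq V] (G : SimpleGraph V)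
    [DecidableRel G.Adj] (κ₀ : ℝ) : ℝ :=
  ∑ e ∈ G.edgeFinset,
    Sym2.lift ⟨fun x y => max 0 (κ₀ - kappaLLY G x y),
      fun x y => by simp only []; rw [kappaLLY_symm]⟩ e

/-- The diameter of a finite graph. -/
noncomputable def gDiam {V : Type*} [Fintype V] (G : SimpleGraph V) : ℕ :=
  Finset.univ.sup fun p : V × V => G.dist p.1 p.2

section BonnetMyersAux

set_option linter.unusedSectionVars false
open Filter Topology Finset

variable {V : Type*} [Fintype V] [DecidableEq V] (G : SimpleGraph V) [DecidableRel G.Adj]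

lemma lazyWalk_sum_mul (α : ℝ) (z : V) (f : V → ℝ) :
    ∑ v, lazyWalk G α z v * f v
      = α * f z + ∑ v ∈ G.neighborFinset z, (1 - α) / (G.degree z) * f v := by
  rw [← Finset.add_sum_erase _ (fun v => lazyWalk G α z v * f v) (Finset.mem_univ z)]
  congr 1
  · simp [lazyWalk]
  · have h1 : ∀ v ∈ Finset.univ.erase z,
        lazyWalk G α z v * f v = if G.Adj z v then (1 - α) / (G.degree z) * f v else 0 := by
      intro v hv
      have hvz : v ≠ z := Finset.ne_of_mem_erase hv
      simp [lazyWalk, hvz, ite_mul]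
    rw [Finset.sum_congr rfl h1, ← Finset.sum_filter]
    congr 1
    ext v
    simp only [Finset.mem_filter, Finset.mem_erase, Finset.mem_univ, true_and,
      SimpleGraph.mem_neighborFinset]
    exact ⟨fun h => h.2, fun h => ⟨⟨h.ne', trivial⟩, h⟩⟩

lemma lazyWalk_isProb {α : ℝ} (hα : α ∈ Set.Ico (0:ℝ) 1) (z : V) (hz : 0 < G.degree z) :
    IsProbMeasure (lazyWalk G α z) := by
  obtain ⟨h0, h1⟩ := hα
  constructor
  · intro v
    unfold lazyWalk
    split
    · exact h0
    split
    · exact div_nonneg (by linarith) (Nat.cast_nonneg _)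
    · exact le_refl 0
  · have h := lazyWalk_sum_mul G α z (fun _ => 1)
    simp only [mul_one] at h
    have hd : (G.degree z : ℝ) ≠ 0 := by
      exact_mod_cast hz.ne'
    rw [h, Finset.sum_const, SimpleGraph.card_neighborFinset_eq_degree, nsmul_eq_mul]
    field_simp
    ring

lemma prodCoupling {m₁ m₂ : V → ℝ} (h₁ : IsProbMeasure m₁) (h₂ : IsProbMeasure m₂) :
    IsCoupling (fun p : V × V => m₁ p.1 * m₂ p.2) m₁ m₂ := by
  unfold IsCoupling
  refine ⟨fun p => mul_nonneg (h₁.1 _) (h₂.1 _), fun x => ?_, fun y => ?_⟩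
  · simp only []
    rw [← Finset.mul_sum, h₂.2, mul_one]
  · simp only []
    rw [← Finset.sum_mul, h₁.2, one_mul]

lemma W_bddBelow (d : V → V → ℝ) (hd : ∀ a b, 0 ≤ d a b) (m₁ m₂ : V → ℝ) :
    BddBelow {c | ∃ A, IsCoupling A m₁ m₂ ∧ c = ∑ p : V × V, A p * d p.1 p.2} := by
  refine ⟨0, ?_⟩
  rintro c ⟨A, ⟨hA0, -, -⟩, rfl⟩
  exact Finset.sum_nonneg fun p _ => mul_nonneg (hA0 p) (hd _ _)

lemma le_W {m₁ m₂ : V → ℝ} (h₁ : IsProbMeasure m₁) (h₂ : IsProbMeasure m₂)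
    (d : V → V → ℝ) (f : V → ℝ) (hf : ∀ a b, f b - f a ≤ d a b) :
    (∑ v, m₂ v * f v) - (∑ v, m₁ v * f v) ≤ W d m₁ m₂ := by
  have hmem : (∑ p : V × V, (m₁ p.1 * m₂ p.2) * d p.1 p.2)
      ∈ {c | ∃ A, IsCoupling A m₁ m₂ ∧ c = ∑ p : V × V, A p * d p.1 p.2} :=
    ⟨fun p => m₁ p.1 * m₂ p.2, prodCoupling h₁ h₂, rfl⟩
  apply le_csInf ⟨_, hmem⟩
  rintro c ⟨A, ⟨hA0, hA1, hA2⟩, rfl⟩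
  have key : ∑ p : V × V, A p * (f p.2 - f p.1) ≤ ∑ p : V × V, A p * d p.1 p.2 :=
    Finset.sum_le_sum fun p _ => mul_le_mul_of_nonneg_left (hf p.1 p.2) (hA0 p)
  refine le_trans (le_of_eq ?_) key
  simp_rw [mul_sub]
  rw [Finset.sum_sub_distrib]
  have e2 : ∑ p : V × V, A p * f p.2 = ∑ v, m₂ v * f v := by
    rw [Fintype.sum_prod_type_right]
    refine Finset.sum_congr rfl fun y _ => ?_
    rw [← hA2 y, Finset.sum_mul]
  have e1 : ∑ p : V × V, A p * f p.1 = ∑ v, m₁ v * f v := by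
    rw [Fintype.sum_prod_type]
    refine Finset.sum_congr rfl fun x _ => ?_
    rw [← hA1 x, Finset.sum_mul]
  rw [e1, e2]

lemma dist_lipschitz (hG : G.Connected) (w : V) :
    ∀ a b : V, (G.dist w b : ℝ) - (G.dist w a : ℝ) ≤ (G.dist a b : ℝ) := by
  intro a b
  have h := hG.dist_triangle (u := w) (v := a) (w := b)
  have h' : (G.dist w b : ℝ) ≤ (G.dist w a : ℝ) + (G.dist a b : ℝ) := by exact_mod_cast h
  linarith

lemma kappaAlpha_le (hG : G.Connected) {α : ℝ} (hα : α ∈ Set.Ico (0:ℝ) 1)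
    (hdeg : ∀ z, 0 < G.degree z) {u v : V} (huv : G.Adj u v) (w : V) :
    kappaAlpha G α u v ≤ 1 - ((∑ x, lazyWalk G α v x * (G.dist w x : ℝ))
      - (∑ x, lazyWalk G α u x * (G.dist w x : ℝ))) := by
  have hd1 : G.dist u v = 1 := SimpleGraph.dist_eq_one_iff_adj.2 huv
  have hW := le_W (lazyWalk_isProb G hα u (hdeg u)) (lazyWalk_isProb G hα v (hdeg v))
    (fun a b => (G.dist a b : ℝ)) (fun x => (G.dist w x : ℝ)) (dist_lipschitz G hG w)
  unfold kappaAlpha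
  rw [hd1]
  push_cast
  rw [div_one]
  linarith

lemma E_self {α : ℝ} (z : V) (hz : 0 < G.degree z) :
    (∑ x, lazyWalk G α z x * (G.dist z x : ℝ)) = 1 - α := by
  rw [lazyWalk_sum_mul]
  rw [SimpleGraph.dist_self]
  have h1 : ∀ x ∈ G.neighborFinset z,
      (1 - α) / (G.degree z : ℝ) * (G.dist z x : ℝ) = (1 - α) / (G.degree z : ℝ) := by
    intro x hx
    rw [SimpleGraph.mem_neighborFinset] at hx
    rw [SimpleGraph.dist_eq_one_iff_adj.2 hx]
    norm_num
  rw [Finset.sum_congr rfl h1, Finset.sum_const,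
    SimpleGraph.card_neighborFinset_eq_degree, nsmul_eq_mul]
  have hd : (G.degree z : ℝ) ≠ 0 := by exact_mod_cast hz.ne'
  field_simp
  push_cast
  ring

lemma E_ge (hG : G.Connected) {α : ℝ} (hα : α ∈ Set.Ico (0:ℝ) 1) (w z : V)
    (hz : 0 < G.degree z) :
    (G.dist w z : ℝ) - (1 - α) ≤ ∑ x, lazyWalk G α z x * (G.dist w x : ℝ) := by
  rw [lazyWalk_sum_mul]
  have hd : (G.degree z : ℝ) ≠ 0 := by exact_mod_cast hz.ne'
  have hc : (0:ℝ) ≤ (1 - α) / (G.degree z : ℝ) :=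
    div_nonneg (by linarith [hα.2]) (Nat.cast_nonneg _)
  have h1 : ∀ x ∈ G.neighborFinset z,
      (1 - α) / (G.degree z : ℝ) * ((G.dist w z : ℝ) - 1)
        ≤ (1 - α) / (G.degree z : ℝ) * (G.dist w x : ℝ) := by
    intro x hx
    rw [SimpleGraph.mem_neighborFinset] at hx
    have hxz : G.dist x z = 1 := SimpleGraph.dist_eq_one_iff_adj.2 hx.symm
    have := dist_lipschitz G hG w x z
    rw [hxz] at this
    apply mul_le_mul_of_nonneg_left _ hc
    push_cast at this ⊢
    linarith
  have h2 := Finset.sum_le_sum h1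
  rw [Finset.sum_const, SimpleGraph.card_neighborFinset_eq_degree, nsmul_eq_mul] at h2
  have h3 : (G.degree z : ℝ) * ((1 - α) / (G.degree z : ℝ) * ((G.dist w z : ℝ) - 1))
      = (1 - α) * ((G.dist w z : ℝ) - 1) := by field_simp
  rw [h3] at h2
  nlinarith [h2]

lemma walk_sum_ge (hG : G.Connected) (κ₀ : ℝ) {α : ℝ} (hα : α ∈ Set.Ico (0:ℝ) 1)
    (hdeg : ∀ z, 0 < G.degree z) (w : V) {a b : V} (p : G.Walk a b)
    (t : Sym2 V → ℝ)
    (ht : ∀ x y, G.Adj x y → (1 - α) * κ₀ - kappaAlpha G α x y ≤ t s(x, y)) :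
    (p.length : ℝ) * ((1 - α) * κ₀ - 1)
      + ((∑ x, lazyWalk G α b x * (G.dist w x : ℝ))
        - (∑ x, lazyWalk G α a x * (G.dist w x : ℝ)))
      ≤ (p.edges.map t).sum := by
  induction p with
  | nil => simp
  | @cons u c b h q ih =>
    simp only [SimpleGraph.Walk.edges_cons, SimpleGraph.Walk.length_cons, List.map_cons,
      List.sum_cons]
    push_cast
    have h1 := kappaAlpha_le G hG hα hdeg h w
    have h2 := ht u c h
    linarith [ih]

lemma degree_pos_of_connected (hG : G.Connected) [Nontrivial V] (z : V) :
    0 < G.degree z := by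
  obtain ⟨w, hw⟩ := exists_ne z
  have hd : 0 < G.dist z w := hG.pos_dist_of_ne (Ne.symm hw)
  obtain ⟨p, hp⟩ := hG.exists_walk_length_eq_dist z w
  cases p with
  | nil => rw [← hp] at hd; simp at hd
  | cons h q => exact (G.degree_pos_iff_exists_adj z).2 ⟨_, h⟩

lemma IAlpha_eq (α κ₀ : ℝ) (t : Sym2 V → ℝ)
    (ht : ∀ x y, t s(x, y) = max 0 ((1 - α) * κ₀ - kappaAlpha G α x y)) :
    IAlpha G α κ₀ = ∑ e ∈ G.edgeFinset, t e := by
  unfold IAlpha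
  refine Finset.sum_congr rfl fun e _ => ?_
  induction e using Sym2.ind with
  | _ u v => rw [Sym2.lift_mk, ht]

lemma key_ineq (hG : G.Connected) (hdeg : ∀ z, 0 < G.degree z) (κ₀ : ℝ) {α : ℝ}
    (hα : α ∈ Set.Ico (0:ℝ) 1) (x₀ y₀ : V) :
    (G.dist x₀ y₀ : ℝ) * ((1 - α) * κ₀) - 2 * (1 - α) ≤ IAlpha G α κ₀ := by
  set t : Sym2 V → ℝ := Sym2.lift ⟨fun x y => max 0 ((1 - α) * κ₀ - kappaAlpha G α x y),
    fun x y => by simp only []; rw [kappaAlpha_symm]⟩ with htdef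
  have ht : ∀ x y, t s(x, y) = max 0 ((1 - α) * κ₀ - kappaAlpha G α x y) := by
    intro x y; rw [htdef, Sym2.lift_mk]
  have ht0 : ∀ e : Sym2 V, 0 ≤ t e := by
    intro e
    induction e using Sym2.ind with
    | _ u v => rw [ht]; exact le_max_left _ _
  rw [IAlpha_eq G α κ₀ t ht]
  obtain ⟨p, hp⟩ := hG.exists_walk_length_eq_dist x₀ y₀
  have hpath : p.IsPath := p.isPath_of_length_eq_dist hp
  have h1 := walk_sum_ge G hG κ₀ hα hdeg x₀ p t
    (fun x y hxy => (ht x y) ▸ le_max_right _ _)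
  rw [hp] at h1
  have h2 : (p.edges.map t).sum ≤ ∑ e ∈ G.edgeFinset, t e := by
    rw [← List.sum_toFinset _ hpath.isTrail.edges_nodup]
    refine Finset.sum_le_sum_of_subset_of_nonneg ?_ fun e he _ => ht0 e
    intro e he
    rw [List.mem_toFinset] at he
    rw [SimpleGraph.mem_edgeFinset]
    exact p.edges_subset_edgeSet he
  have h3 := E_self G (α := α) x₀ (hdeg x₀)
  have h4 := E_ge G hG hα x₀ y₀ (hdeg y₀)
  linarith


lemma lazyWalk_interp {α β : ℝ} (hα : α < 1) (x v : V) :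
    lazyWalk G β x v = (1 - β) / (1 - α) * lazyWalk G α x v
      + (1 - (1 - β) / (1 - α)) * (if v = x then 1 else 0) := by
  have h1 : (1:ℝ) - α ≠ 0 := by linarith
  unfold lazyWalk
  by_cases hv : v = x
  · simp only [if_pos hv]
    field_simp
    ring
  · simp only [if_neg hv, mul_zero, add_zero]
    by_cases ha : G.Adj x v
    · simp only [if_pos ha]
      rw [div_mul_div_comm, mul_comm ((1:ℝ) - β), mul_div_mul_left _ _ h1]
    · simp [if_neg ha]

lemma W_interp (hdeg : ∀ z, 0 < G.degree z) (x y : V) {α β : ℝ}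
    (hα : α ∈ Set.Ico (0:ℝ) 1) (hαβ : α ≤ β) (hβ : β < 1) :
    W (fun a b => (G.dist a b : ℝ)) (lazyWalk G β x) (lazyWalk G β y)
      ≤ (1 - β) / (1 - α) * W (fun a b => (G.dist a b : ℝ)) (lazyWalk G α x) (lazyWalk G α y)
        + (1 - (1 - β) / (1 - α)) * (G.dist x y : ℝ) := by
  have hα1 : (0:ℝ) < 1 - α := by linarith [hα.2]
  have hβ1 : (0:ℝ) < 1 - β := by linarith
  set l : ℝ := (1 - β) / (1 - α) with hl
  have hl0 : 0 < l := div_pos hβ1 hα1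
  have hl1 : l ≤ 1 := by rw [hl, div_le_one hα1]; linarith
  have hd0 : ∀ a b : V, (0:ℝ) ≤ (G.dist a b : ℝ) := fun a b => Nat.cast_nonneg _
  have step1 : ∀ c ∈ {c | ∃ A, IsCoupling A (lazyWalk G α x) (lazyWalk G α y) ∧
      c = ∑ p : V × V, A p * (G.dist p.1 p.2 : ℝ)},
      W (fun a b => (G.dist a b : ℝ)) (lazyWalk G β x) (lazyWalk G β y)
        ≤ l * c + (1 - l) * (G.dist x y : ℝ) := by
    rintro c ⟨A, ⟨hA0, hA1, hA2⟩, rfl⟩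
    have hite : ∀ v w : V, (0:ℝ) ≤ if v = w then 1 else 0 := by
      intro v w; split <;> norm_num
    have hcoup : IsCoupling (fun p : V × V => l * A p
        + (1 - l) * (if p = (x, y) then 1 else 0)) (lazyWalk G β x) (lazyWalk G β y) := by
      unfold IsCoupling
      refine ⟨fun p => ?_, fun x' => ?_, fun y' => ?_⟩
      · have h1 : (0:ℝ) ≤ if p = (x, y) then 1 else 0 := by split <;> norm_num
        exact add_nonneg (mul_nonneg hl0.le (hA0 p))
          (mul_nonneg (by linarith : (0:ℝ) ≤ 1 - l) h1)
      · simp only []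
        rw [Finset.sum_add_distrib, ← Finset.mul_sum, hA1, ← Finset.mul_sum]
        have hrow : (∑ y', if ((x', y') : V × V) = (x, y) then (1:ℝ) else 0)
            = if x' = x then 1 else 0 := by
          by_cases hx' : x' = x
          · subst hx'
            simp only [Prod.mk.injEq, true_and, if_pos rfl]
            rw [Finset.sum_ite_eq' Finset.univ y (fun _ => (1:ℝ))]
            simp
          · simp [Prod.ext_iff, hx']
        rw [hrow]
        exact (lazyWalk_interp G hα.2 x x').symm
      · simp only []
        rw [Finset.sum_add_distrib, ← Finset.mul_sum, hA2, ← Finset.mul_sum]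
        have hcol : (∑ x', if ((x', y') : V × V) = (x, y) then (1:ℝ) else 0)
            = if y' = y then 1 else 0 := by
          by_cases hy' : y' = y
          · subst hy'
            simp only [Prod.mk.injEq, and_true, if_pos rfl]
            rw [Finset.sum_ite_eq' Finset.univ x (fun _ => (1:ℝ))]
            simp
          · simp [Prod.ext_iff, hy']
        rw [hcol]
        exact (lazyWalk_interp G hα.2 y y').symm
    have hcost : l * (∑ p : V × V, A p * (G.dist p.1 p.2 : ℝ)) + (1 - l) * (G.dist x y : ℝ)
        = ∑ p : V × V, (l * A p + (1 - l) * (if p = (x, y) then 1 else 0))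
            * (G.dist p.1 p.2 : ℝ) := by
      have hpt : ∑ p : V × V, (if p = (x, y) then (1:ℝ) else 0) * (G.dist p.1 p.2 : ℝ)
          = (G.dist x y : ℝ) := by
        simp only [ite_mul, one_mul, zero_mul]
        rw [Finset.sum_ite_eq' Finset.univ ((x, y) : V × V)
          (fun p => (G.dist p.1 p.2 : ℝ))]
        simp
      have hexp : ∀ p : V × V, (l * A p + (1 - l) * (if p = (x, y) then 1 else 0))
          * (G.dist p.1 p.2 : ℝ)
          = l * (A p * (G.dist p.1 p.2 : ℝ))
            + (1 - l) * ((if p = (x, y) then (1:ℝ) else 0) * (G.dist p.1 p.2 : ℝ)) := by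
        intro p; ring
      rw [Finset.sum_congr rfl fun p _ => hexp p, Finset.sum_add_distrib,
        ← Finset.mul_sum, ← Finset.mul_sum, hpt]
    have hmem : l * (∑ p : V × V, A p * (G.dist p.1 p.2 : ℝ)) + (1 - l) * (G.dist x y : ℝ)
        ∈ {c | ∃ A, IsCoupling A (lazyWalk G β x) (lazyWalk G β y) ∧
            c = ∑ p : V × V, A p * (G.dist p.1 p.2 : ℝ)} :=
      ⟨_, hcoup, hcost⟩
    exact csInf_le (W_bddBelow (fun a b => (G.dist a b : ℝ)) hd0 _ _) hmem
  have hne : {c | ∃ A, IsCoupling A (lazyWalk G α x) (lazyWalk G α y) ∧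
      c = ∑ p : V × V, A p * (G.dist p.1 p.2 : ℝ)}.Nonempty :=
    ⟨_, ⟨_, prodCoupling (lazyWalk_isProb G hα x (hdeg x))
      (lazyWalk_isProb G hα y (hdeg y)), rfl⟩⟩
  have step2 : (W (fun a b => (G.dist a b : ℝ)) (lazyWalk G β x) (lazyWalk G β y)
      - (1 - l) * (G.dist x y : ℝ)) / l
      ≤ W (fun a b => (G.dist a b : ℝ)) (lazyWalk G α x) (lazyWalk G α y) := by
    refine le_csInf hne fun c hc => ?_
    rw [div_le_iff₀ hl0]
    have := step1 c hc
    nlinarith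
  rw [div_le_iff₀ hl0] at step2
  nlinarith [step2]

lemma kappaDiv_monotoneOn (hG : G.Connected) (hdeg : ∀ z, 0 < G.degree z) {x y : V}
    (hxy : G.Adj x y) :
    MonotoneOn (fun α => kappaAlpha G α x y / (1 - α)) (Set.Ico (0:ℝ) 1) := by
  intro α hα β hβ hαβ
  simp only []
  have hα1 : (0:ℝ) < 1 - α := by linarith [hα.2]
  have hβ1 : (0:ℝ) < 1 - β := by linarith [hβ.2]
  have hdpos : (0:ℝ) < (G.dist x y : ℝ) := by
    exact_mod_cast hG.pos_dist_of_ne hxy.ne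
  have hdne : (G.dist x y : ℝ) ≠ 0 := hdpos.ne'
  have hW := W_interp G hdeg x y hα hαβ hβ.2
  set Wα := W (fun a b => (G.dist a b : ℝ)) (lazyWalk G α x) (lazyWalk G α y) with hWα
  set Wβ := W (fun a b => (G.dist a b : ℝ)) (lazyWalk G β x) (lazyWalk G β y) with hWβ
  set d := (G.dist x y : ℝ) with hd
  set l : ℝ := (1 - β) / (1 - α) with hl
  unfold kappaAlpha
  rw [div_le_div_iff₀ hα1 hβ1]
  have h2 : Wβ / d ≤ (l * Wα + (1 - l) * d) / d := by gcongr
  have h3 : (l * Wα + (1 - l) * d) / d = l * (Wα / d) + (1 - l) := by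
    field_simp
  have h4 : l * (1 - α) = 1 - β := by
    rw [hl]; field_simp
  have e : l * (1 - Wα / d) = l - l * (Wα / d) := by ring
  have h5 : l * (1 - Wα / d) ≤ 1 - Wβ / d := by
    rw [h3] at h2; linarith
  have h6 := mul_le_mul_of_nonneg_right h5 hα1.le
  have e2 : l * (1 - Wα / d) * (1 - α) = (1 - Wα / d) * (l * (1 - α)) := by ring
  rw [e2, h4] at h6
  linarith

lemma kappaDiv_le_two (hG : G.Connected) (hdeg : ∀ z, 0 < G.degree z) {x y : V}
    (hxy : G.Adj x y) {α : ℝ} (hα : α ∈ Set.Ico (0:ℝ) 1) :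
    kappaAlpha G α x y / (1 - α) ≤ 2 := by
  have hα1 : (0:ℝ) < 1 - α := by linarith [hα.2]
  have hd1 : G.dist x y = 1 := SimpleGraph.dist_eq_one_iff_adj.2 hxy
  have hW := le_W (lazyWalk_isProb G hα x (hdeg x)) (lazyWalk_isProb G hα y (hdeg y))
    (fun a b => (G.dist a b : ℝ)) (fun v => (G.dist x v : ℝ)) (dist_lipschitz G hG x)
  have hE1 := E_self G (α := α) x (hdeg x)
  have hE2 := E_ge G hG hα x y (hdeg y)
  rw [hd1] at hE2
  push_cast at hE2
  unfold kappaAlpha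
  rw [hd1]
  push_cast
  rw [div_one, div_le_iff₀ hα1]
  linarith

lemma kappaDiv_tendsto (hG : G.Connected) (hdeg : ∀ z, 0 < G.degree z) {x y : V}
    (hxy : G.Adj x y) :
    Tendsto (fun α => kappaAlpha G α x y / (1 - α)) (𝓝[<] (1:ℝ))
      (𝓝 (kappaLLY G x y)) := by
  set g := fun α => kappaAlpha G α x y / (1 - α) with hg
  have hmono : MonotoneOn g (Set.Ioo (0:ℝ) 1) :=
    (kappaDiv_monotoneOn G hG hdeg hxy).mono Set.Ioo_subset_Ico_self
  have hbdd : BddAbove (g '' Set.Ioo 0 1) := by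
    refine ⟨2, ?_⟩
    rintro c ⟨a, ha, rfl⟩
    exact kappaDiv_le_two G hG hdeg hxy ⟨ha.1.le, ha.2⟩
  have hne : (Set.Ioo (0:ℝ) 1).Nonempty := ⟨1/2, by norm_num⟩
  have htd := MonotoneOn.tendsto_nhdsWithin_Ioo_left hne hmono hbdd
  have heq : kappaLLY G x y = sSup (g '' Set.Ioo 0 1) := by
    unfold kappaLLY
    rw [show nhdsWithin (1:ℝ) (Set.Ico (0:ℝ) 1) = 𝓝[<] (1:ℝ) from
      nhdsWithin_Ico_eq_nhdsLT zero_lt_one]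
    exact htd.limUnder_eq
  rw [heq]
  exact htd

lemma IAlpha_tendsto (hG : G.Connected) (hdeg : ∀ z, 0 < G.degree z) (κ₀ : ℝ) :
    Tendsto (fun α => IAlpha G α κ₀ / (1 - α)) (𝓝[<] (1:ℝ)) (𝓝 (ILLY G κ₀)) := by
  unfold ILLY
  simp only [IAlpha, Finset.sum_div]
  refine tendsto_finset_sum _ fun e he => ?_
  induction e using Sym2.ind with
  | _ u v =>
    have hadj : G.Adj u v := by
      rw [← SimpleGraph.mem_edgeSet]
      exact SimpleGraph.mem_edgeFinset.1 he
    simp only [Sym2.lift_mk]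
    have hg := kappaDiv_tendsto G hG hdeg hadj
    have h2 : Tendsto (fun α => max 0 (κ₀ - kappaAlpha G α u v / (1 - α))) (𝓝[<] (1:ℝ))
        (𝓝 (max 0 (κ₀ - kappaLLY G u v))) :=
      tendsto_const_nhds.max (tendsto_const_nhds.sub hg)
    refine h2.congr' ?_
    filter_upwards [Ioo_mem_nhdsLT (show (0:ℝ) < 1 by norm_num)] with α hα
    have hα1 : (0:ℝ) < 1 - α := by linarith [hα.2]
    rw [← max_div_div_right hα1.le, zero_div]
    congr 1
    field_simp

lemma ILLY_nonneg (κ₀ : ℝ) : 0 ≤ ILLY G κ₀ := by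
  refine Finset.sum_nonneg fun e _ => ?_
  induction e using Sym2.ind with
  | _ u v =>
    rw [Sym2.lift_mk]
    exact le_max_left _ _


end BonnetMyersAux

/-- Bonnet–Myers-type estimate with integral Lin–Lu–Yau Ricci curvature. -/
theorem stmt_6 {V : Type*} [Fintype V] [DecidableEq V] (G : SimpleGraph V)
    [DecidableRel G.Adj] (hG : G.Connected) (κ₀ : ℝ) (hκ : 0 < κ₀) :
    (gDiam G : ℤ) ≤ ⌊(2 + ILLY G κ₀) / κ₀⌋ := by
    classical
  have hILLY0 : 0 ≤ ILLY G κ₀ := ILLY_nonneg G κ₀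
  by_cases hdiam : gDiam G = 0
  · rw [hdiam]
    refine Int.le_floor.2 ?_
    push_cast
    exact div_nonneg (by linarith) hκ.le
  · haveI : Nonempty V := hG.nonempty
    obtain ⟨⟨x₀, y₀⟩, -, hxy⟩ := Finset.exists_mem_eq_sup (Finset.univ : Finset (V × V))
      Finset.univ_nonempty (fun p : V × V => G.dist p.1 p.2)
    have hL : gDiam G = G.dist x₀ y₀ := hxy
    have hne : x₀ ≠ y₀ := by
      rintro rfl
      exact hdiam (by rw [hL, SimpleGraph.dist_self])
    haveI : Nontrivial V := ⟨x₀, y₀, hne⟩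
    have hdeg : ∀ z, 0 < G.degree z := degree_pos_of_connected G hG
    have hkey : ∀ᶠ α in nhdsWithin (1:ℝ) (Set.Iio 1),
        (gDiam G : ℝ) * κ₀ - 2 ≤ IAlpha G α κ₀ / (1 - α) := by
      filter_upwards [Ioo_mem_nhdsLT (show (0:ℝ) < 1 by norm_num)] with α hα
      have hα1 : (0:ℝ) < 1 - α := by linarith [hα.2]
      have h := key_ineq G hG hdeg κ₀ ⟨hα.1.le, hα.2⟩ x₀ y₀
      rw [← hL] at h
      rw [le_div_iff₀ hα1]
      have e : ((gDiam G : ℝ) * κ₀ - 2) * (1 - α)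
          = (gDiam G : ℝ) * ((1 - α) * κ₀) - 2 * (1 - α) := by ring
      rw [e]
      linarith
    have hfinal : (gDiam G : ℝ) * κ₀ - 2 ≤ ILLY G κ₀ :=
      ge_of_tendsto (IAlpha_tendsto G hG hdeg κ₀) hkey
    rw [Int.le_floor]
    push_cast
    rw [le_div_iff₀ hκ]
    linarith
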